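/- Let E and F be vector lattices with F Dedekind complete, and let T : E → F be an order bounded operator (so that its modulus |T| exists). Then T is b-order bounded if and only if |T| is b-order bounded. -/

import Mathlib

open Set

noncomputable section

/-- A subset of a type with an order is order bounded. -/
def OrdBdd {V : Type*} [LE V] (S : Set V) : Prop :=
  ∃ a b : V, ∀ x ∈ S, a ≤ x ∧ x ≤ b

variable (V : Type*) [AddCommGroup V] [Module ℝ V] [Preorder V]

/-- The order dual `V^~` of an ordered vector space `V`: the submodule of those linear
functionals mapping order bounded sets to (order) bounded sets. -/
def obDual : Submodule ℝ (V →ₗ[ℝ] ℝ) where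
  carrier := {f | ∀ S : Set V, OrdBdd S → OrdBdd (f '' S)}
  zero_mem' := by
    intro S _
    exact ⟨0, 0, by rintro _ ⟨x, hx, rfl⟩; simp⟩
  add_mem' := by
    intro f g hf hg S hS
    obtain ⟨a, b, hab⟩ := hf S hS
    obtain ⟨c, d, hcd⟩ := hg S hS
    refine ⟨a + c, b + d, ?_⟩
    rintro _ ⟨x, hx, rfl⟩
    have h1 := hab (f x) ⟨x, hx, rfl⟩
    have h2 := hcd (g x) ⟨x, hx, rfl⟩
    simp only [LinearMap.add_apply]
    constructor <;> linarith [h1.1, h1.2, h2.1, h2.2]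
  smul_mem' := by
    intro c f hf S hS
    obtain ⟨a, b, hab⟩ := hf S hS
    refine ⟨-(|c| * max |a| |b|), |c| * max |a| |b|, ?_⟩
    rintro _ ⟨x, hx, rfl⟩
    obtain ⟨h1a, h1b⟩ := hab (f x) ⟨x, hx, rfl⟩
    have hfx : |f x| ≤ max |a| |b| := by
      refine abs_le.2 ⟨?_, ?_⟩
      · have h := neg_abs_le a
        have h' := le_max_left |a| |b|
        linarith
      · have h := le_abs_self b
        have h' := le_max_right |a| |b|
        linarith
    have habs : |(c • f) x| ≤ |c| * max |a| |b| := by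
      simp only [LinearMap.smul_apply, smul_eq_mul, abs_mul]
      exact mul_le_mul_of_nonneg_left hfx (abs_nonneg c)
    exact abs_le.1 habs

/-- The order on the order dual: `f ≤ g` iff `f x ≤ g x` for every `0 ≤ x`. -/
instance obDualPreorder : Preorder ↥(obDual V) where
  le f g := ∀ x : V, 0 ≤ x → (f : V →ₗ[ℝ] ℝ) x ≤ (g : V →ₗ[ℝ] ℝ) x
  le_refl f x _ := le_rfl
  le_trans f g h h1 h2 x hx := (h1 x hx).trans (h2 x hx)

/-- The order bidual `V^~~` of `V`. -/
abbrev Bidual := ↥(obDual ↥(obDual V))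

instance bidualPreorder : Preorder (Bidual V) := obDualPreorder ↥(obDual V)

variable {V}

/-- Evaluation at `x` as a linear functional on the order dual. -/
def evalMap (x : V) : ↥(obDual V) →ₗ[ℝ] ℝ where
  toFun f := (f : V →ₗ[ℝ] ℝ) x
  map_add' f g := by simp
  map_smul' c f := by simp

variable (E : Type*) [AddCommGroup E] [Module ℝ E] [Lattice E]
  [CovariantClass E E (· + ·) (· ≤ ·)]

/-- The canonical evaluation map `Q_E : E → E^~~`. -/
def QE (x : E) : Bidual E :=
  ⟨evalMap x, by
    intro S hS
    obtain ⟨φ, ψ, h⟩ := hS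
    refine ⟨(φ : E →ₗ[ℝ] ℝ) (x ⊔ 0) - (ψ : E →ₗ[ℝ] ℝ) (-x ⊔ 0),
            (ψ : E →ₗ[ℝ] ℝ) (x ⊔ 0) - (φ : E →ₗ[ℝ] ℝ) (-x ⊔ 0), ?_⟩
    rintro _ ⟨f, hf, rfl⟩
    obtain ⟨hφf, hfψ⟩ := h f hf
    have hx1 : (0 : E) ≤ x ⊔ 0 := le_sup_right
    have hx2 : (0 : E) ≤ -x ⊔ 0 := le_sup_right
    have hdecomp : (f : E →ₗ[ℝ] ℝ) x
        = (f : E →ₗ[ℝ] ℝ) (x ⊔ 0) - (f : E →ₗ[ℝ] ℝ) (-x ⊔ 0) := by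
      rw [← map_sub]
      congr 1
      have := posPart_sub_negPart x
      simpa [posPart, negPart] using this.symm
    have h1 := hφf _ hx1
    have h2 := hfψ _ hx1
    have h3 := hφf _ hx2
    have h4 := hfψ _ hx2
    have hev : evalMap x f = (f : E →ₗ[ℝ] ℝ) x := rfl
    rw [hev, hdecomp]
    exact ⟨by linarith, by linarith⟩⟩

/-- `A ⊆ E` is `b`-order bounded: its canonical image in `E^~~` is order bounded. -/
def BOrdBddSet (A : Set E) : Prop := OrdBdd (QE E '' A)

/-- `Q_E` is an (injective) lattice embedding of `E` into `E^~~`. -/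
def QLatticeEmbedding : Prop :=
  Function.Injective (QE E) ∧ (∀ x y : E, x ≤ y ↔ QE E x ≤ QE E y) ∧
    ∀ x y : E, IsLUB {QE E x, QE E y} (QE E (x ⊔ y))

/-- `E` is `b`-Dedekind complete: every nonempty subset of `E` bounded above by an element
of `E^~~` has a supremum in `E`. -/
def BDedekindComplete : Prop :=
  ∀ S : Set E, S.Nonempty → (∃ φ : Bidual E, ∀ a ∈ S, QE E a ≤ φ) → ∃ s : E, IsLUB S s

variable {E}

/-- The net `x` in `E` is `b`-order convergent to `a`: some net in `E^~~` with the same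
index set decreases to `0` in `E^~~` and dominates `|x i - a|` (canonically embedded). -/
def BOConv {ι : Type*} [Preorder ι] (x : ι → E) (a : E) : Prop :=
  ∃ y : ι → Bidual E, Antitone y ∧ IsGLB (Set.range y) 0 ∧ ∀ i, QE E (|x i - a|) ≤ y i

/-- `x_α ↓_b 0` : the net `x` is decreasing and `inf_α x_α = 0` holds in `E^~~`. -/
def DownB0 {ι : Type*} [Preorder ι] (x : ι → E) : Prop :=
  Antitone x ∧ IsGLB (Set.range fun i => QE E (x i)) 0

section Operators

variable {G : Type*} [AddCommGroup G] [Module ℝ G] [Lattice G]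
  [CovariantClass G G (· + ·) (· ≤ ·)]

/-- `T` is an order bounded operator. -/
def OrderBddOp (T : E →ₗ[ℝ] G) : Prop := ∀ A : Set E, OrdBdd A → OrdBdd (T '' A)

/-- `T` is a `b`-order bounded operator: it maps `b`-order bounded sets to
`b`-order bounded sets. -/
def BOrdBddOp (T : E →ₗ[ℝ] G) : Prop := ∀ A : Set E, BOrdBddSet E A → BOrdBddSet G (T '' A)

/-- `T` is `b`-order continuous: `x_α →bo 0` in `E` implies `T x_α →bo 0` in `G`. -/
def BOCont (T : E →ₗ[ℝ] G) : Prop :=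
  ∀ (ι : Type*) [Preorder ι] [Nonempty ι] [IsDirected ι (· ≤ ·)] (x : ι → E),
    BOConv x 0 → BOConv (fun i => T (x i)) 0

end Operators

/-- The pointwise order on operators on positive cones: `S ≤ T` iff `S x ≤ T x` for `x ≥ 0`. -/
def OpLE {E G : Type*} [AddCommGroup E] [Module ℝ E] [Lattice E]
    [AddCommGroup G] [Module ℝ G] [Lattice G] (S T : E →ₗ[ℝ] G) : Prop :=
  ∀ x : E, 0 ≤ x → S x ≤ T x

/-- `M` is the modulus `|T| = T ∨ (-T)` of `T` within the order bounded operators. -/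
def IsModulusOf {E G : Type*} [AddCommGroup E] [Module ℝ E] [Lattice E]
    [AddCommGroup G] [Module ℝ G] [Lattice G]
    (M T : E →ₗ[ℝ] G) : Prop :=
  OrderBddOp M ∧ OpLE T M ∧ OpLE (-T) M ∧
    ∀ R : E →ₗ[ℝ] G, OrderBddOp R → OpLE T R → OpLE (-T) R → OpLE M R

section AuxLemmas

variable {E₁ F₁ : Type*}
  [AddCommGroup E₁] [Module ℝ E₁] [Lattice E₁] [CovariantClass E₁ E₁ (· + ·) (· ≤ ·)]
  [AddCommGroup F₁] [Module ℝ F₁] [Lattice F₁] [CovariantClass F₁ F₁ (· + ·) (· ≤ ·)]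

lemma comp_mem_obDual (R : E₁ →ₗ[ℝ] F₁) (hR : OrderBddOp R) (g : ↥(obDual F₁)) :
    (g : F₁ →ₗ[ℝ] ℝ) ∘ₗ R ∈ obDual E₁ := by
  intro S hS
  rw [LinearMap.coe_comp, Set.image_comp]
  exact g.2 _ (hR S hS)

/-- A positive order bounded operator is b-order bounded. -/
lemma bOrdBddOp_of_pos (R : E₁ →ₗ[ℝ] F₁) (hR : OrderBddOp R)
    (hpos : ∀ x : E₁, 0 ≤ x → 0 ≤ R x) : BOrdBddOp R := by
  intro A hA
  obtain ⟨Φ, Ψ, h⟩ := hA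
  -- the adjoint map on order duals
  set cmp : ↥(obDual F₁) →ₗ[ℝ] ↥(obDual E₁) :=
    { toFun := fun g => ⟨(g : F₁ →ₗ[ℝ] ℝ) ∘ₗ R, comp_mem_obDual R hR g⟩
      map_add' := fun g₁ g₂ => by ext x; simp
      map_smul' := fun c g => by ext x; simp } with hcmpdef
  have hcmp : ∀ S : Set ↥(obDual F₁), OrdBdd S → OrdBdd (cmp '' S) := by
    rintro S ⟨g₁, g₂, hg⟩
    refine ⟨cmp g₁, cmp g₂, ?_⟩
    rintro _ ⟨g, hgS, rfl⟩
    obtain ⟨h1, h2⟩ := hg g hgS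
    exact ⟨fun x hx => h1 (R x) (hpos x hx), fun x hx => h2 (R x) (hpos x hx)⟩
  have hmem : ∀ Θ : Bidual E₁, (Θ : ↥(obDual E₁) →ₗ[ℝ] ℝ) ∘ₗ cmp ∈ obDual ↥(obDual F₁) := by
    intro Θ S hS
    rw [LinearMap.coe_comp, Set.image_comp]
    exact Θ.2 _ (hcmp S hS)
  refine ⟨⟨(Φ : ↥(obDual E₁) →ₗ[ℝ] ℝ) ∘ₗ cmp, hmem Φ⟩,
          ⟨(Ψ : ↥(obDual E₁) →ₗ[ℝ] ℝ) ∘ₗ cmp, hmem Ψ⟩, ?_⟩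
  rintro _ ⟨_, ⟨a, ha, rfl⟩, rfl⟩
  obtain ⟨h1, h2⟩ := h (QE E₁ a) ⟨a, ha, rfl⟩
  have hcg : ∀ g : ↥(obDual F₁), 0 ≤ g → (0 : ↥(obDual E₁)) ≤ cmp g := by
    intro g hg x hx
    exact hg (R x) (hpos x hx)
  constructor
  · intro g hg
    exact h1 (cmp g) (hcg g hg)
  · intro g hg
    exact h2 (cmp g) (hcg g hg)

/-- b-order boundedness is preserved under differences. -/
lemma bOrdBddOp_sub (R₁ R₂ : E₁ →ₗ[ℝ] F₁) (h1 : BOrdBddOp R₁) (h2 : BOrdBddOp R₂) :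
    BOrdBddOp (R₁ - R₂) := by
  intro A hA
  obtain ⟨Φ₁, Ψ₁, hb1⟩ := h1 A hA
  obtain ⟨Φ₂, Ψ₂, hb2⟩ := h2 A hA
  refine ⟨Φ₁ - Ψ₂, Ψ₁ - Φ₂, ?_⟩
  rintro _ ⟨_, ⟨a, ha, rfl⟩, rfl⟩
  obtain ⟨p1, q1⟩ := hb1 (QE F₁ (R₁ a)) ⟨R₁ a, ⟨a, ha, rfl⟩, rfl⟩
  obtain ⟨p2, q2⟩ := hb2 (QE F₁ (R₂ a)) ⟨R₂ a, ⟨a, ha, rfl⟩, rfl⟩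
  constructor
  · intro g hg
    have e1 := p1 g hg
    have e2 := q2 g hg
    have : ((Φ₁ - Ψ₂ : Bidual F₁) : ↥(obDual F₁) →ₗ[ℝ] ℝ) g
        = ((Φ₁ : Bidual F₁) : ↥(obDual F₁) →ₗ[ℝ] ℝ) g
          - ((Ψ₂ : Bidual F₁) : ↥(obDual F₁) →ₗ[ℝ] ℝ) g := rfl
    rw [this]
    have : ((QE F₁ ((R₁ - R₂) a)) : ↥(obDual F₁) →ₗ[ℝ] ℝ) g
        = (g : F₁ →ₗ[ℝ] ℝ) (R₁ a) - (g : F₁ →ₗ[ℝ] ℝ) (R₂ a) := by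
      show (g : F₁ →ₗ[ℝ] ℝ) ((R₁ - R₂) a) = _
      rw [LinearMap.sub_apply, map_sub]
    rw [this]
    have e1' : ((Φ₁ : Bidual F₁) : ↥(obDual F₁) →ₗ[ℝ] ℝ) g ≤ (g : F₁ →ₗ[ℝ] ℝ) (R₁ a) := e1
    have e2' : (g : F₁ →ₗ[ℝ] ℝ) (R₂ a) ≤ ((Ψ₂ : Bidual F₁) : ↥(obDual F₁) →ₗ[ℝ] ℝ) g := e2
    linarith
  · intro g hg
    have e1 := q1 g hg
    have e2 := p2 g hg
    have : ((Ψ₁ - Φ₂ : Bidual F₁) : ↥(obDual F₁) →ₗ[ℝ] ℝ) g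
        = ((Ψ₁ : Bidual F₁) : ↥(obDual F₁) →ₗ[ℝ] ℝ) g
          - ((Φ₂ : Bidual F₁) : ↥(obDual F₁) →ₗ[ℝ] ℝ) g := rfl
    rw [this]
    have : ((QE F₁ ((R₁ - R₂) a)) : ↥(obDual F₁) →ₗ[ℝ] ℝ) g
        = (g : F₁ →ₗ[ℝ] ℝ) (R₁ a) - (g : F₁ →ₗ[ℝ] ℝ) (R₂ a) := by
      show (g : F₁ →ₗ[ℝ] ℝ) ((R₁ - R₂) a) = _
      rw [LinearMap.sub_apply, map_sub]
    rw [this]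
    have e1' : (g : F₁ →ₗ[ℝ] ℝ) (R₁ a) ≤ ((Ψ₁ : Bidual F₁) : ↥(obDual F₁) →ₗ[ℝ] ℝ) g := e1
    have e2' : ((Φ₂ : Bidual F₁) : ↥(obDual F₁) →ₗ[ℝ] ℝ) g ≤ (g : F₁ →ₗ[ℝ] ℝ) (R₂ a) := e2
    linarith

lemma orderBddOp_add (R₁ R₂ : E₁ →ₗ[ℝ] F₁) (h1 : OrderBddOp R₁) (h2 : OrderBddOp R₂) :
    OrderBddOp (R₁ + R₂) := by
  intro A hA
  obtain ⟨c, d, hc⟩ := h1 A hA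
  obtain ⟨c', d', hc'⟩ := h2 A hA
  refine ⟨c + c', d + d', ?_⟩
  rintro _ ⟨a, ha, rfl⟩
  obtain ⟨u1, u2⟩ := hc (R₁ a) ⟨a, ha, rfl⟩
  obtain ⟨v1, v2⟩ := hc' (R₂ a) ⟨a, ha, rfl⟩
  constructor
  · calc c + c' ≤ c + R₂ a := add_le_add_right v1 c
      _ ≤ R₂ a + R₁ a := by rw [add_comm]; exact add_le_add_right u1 _
      _ = (R₁ + R₂) a := by rw [add_comm]; rfl
  · calc (R₁ + R₂) a = R₁ a + R₂ a := rfl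
      _ ≤ R₁ a + d' := add_le_add_right v2 _
      _ ≤ d' + d := by rw [add_comm]; exact add_le_add_right u2 _
      _ = d + d' := add_comm _ _

end AuxLemmas

/-- for vector lattices `E`, `F` with `F` Dedekind complete and an order
bounded operator `T : E → F` with modulus `|T|`, `T` is `b`-order bounded iff `|T|` is
`b`-order bounded. -/
theorem bOrdBddOp_iff_modulus {E F : Type*}
    [AddCommGroup E] [Module ℝ E] [Lattice E] [CovariantClass E E (· + ·) (· ≤ ·)]
    [PosSMulMono ℝ E]
    [AddCommGroup F] [Module ℝ F] [Lattice F] [CovariantClass F F (· + ·) (· ≤ ·)]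
    [PosSMulMono ℝ F]
    (hDC : ∀ S : Set F, S.Nonempty → BddAbove S → ∃ a : F, IsLUB S a)
    (T M : E →ₗ[ℝ] F) (hT : OrderBddOp T) (hM : IsModulusOf M T) :
    BOrdBddOp T ↔ BOrdBddOp M := by
  obtain ⟨hMob, hTM, hTM', _⟩ := hM
  -- M is positive
  have hMpos : ∀ x : E, 0 ≤ x → 0 ≤ M x := by
    intro x hx
    have h1 : T x ≤ M x := hTM x hx
    have h2 : -(T x) ≤ M x := hTM' x hx
    have h3 : (0 : F) ≤ M x + M x := by
      calc (0 : F) = -(T x) + T x := by abel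
        _ ≤ -(T x) + M x := add_le_add_right h1 _
        _ ≤ M x + M x := by rw [add_comm]; exact add_le_add_right h2 _
    have h4 : (0 : F) ≤ ((1 : ℝ)/2) • (M x + M x) := by
      have := smul_le_smul_of_nonneg_left h3 (by norm_num : (0:ℝ) ≤ 1/2)
      simpa using this
    have h5 : ((1 : ℝ)/2) • (M x + M x) = M x := by
      rw [← two_smul ℝ (M x), smul_smul]
      norm_num
    rwa [h5] at h4
  have hMb : BOrdBddOp M := bOrdBddOp_of_pos M hMob hMpos
  -- M + T is positive and order bounded
  have hMTpos : ∀ x : E, 0 ≤ x → 0 ≤ (M + T) x := by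
    intro x hx
    have h2 : -(T x) ≤ M x := hTM' x hx
    calc (0 : F) = -(T x) + T x := by abel
      _ ≤ M x + T x := add_le_add_left h2 _
      _ = (M + T) x := rfl
  have hMTob : OrderBddOp (M + T) := orderBddOp_add M T hMob hT
  have hMTb : BOrdBddOp (M + T) := bOrdBddOp_of_pos (M + T) hMTob hMTpos
  have hTb : BOrdBddOp T := by
    have := bOrdBddOp_sub (M + T) M hMTb hMb
    simpa [add_sub_cancel_left] using this
  exact ⟨fun _ => hMb, fun _ => hTb⟩
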